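/- Let c1, c2 > 0, δ2 ∈ (0,1), cbar2 = (1 + δ2)·c2, and let h2j ≥ 0, h3j ≥ 0 be real numbers. Define τ2 = (-(c1 + cbar2) + √((c1 + cbar2)² + 2·δ2·c1·cbar2)) / (c1·cbar2). Then for every τ ∈ [0, τ2], (c1·cbar2·(c1·h2j - c2·h3j)/2)·τ² + (c1²·h2j - (c1 + cbar2)·c2·h3j)·τ + δ2·c2·h3j ≥ c2·h3j·(-(c1·cbar2/2)·τ² - (c1 + cbar2)·τ + δ2) ≥ 0. -/

import Mathlib

/-- Uniform lower bound on the lower-margin quadratic: for `τ ∈ [0, τ2]` the explicit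
quadratic expression for `m2(t_j + τ)` is bounded below by `c2 h3j` times a quadratic in `τ`
whose largest root is `τ2`, hence is nonnegative. -/
theorem stmt_6 (c1 c2 δ2 cbar2 h2j h3j : ℝ) (hc1 : 0 < c1) (hc2 : 0 < c2)
    (hδ2 : δ2 ∈ Set.Ioo (0:ℝ) 1) (hcbar2 : cbar2 = (1 + δ2) * c2)
    (hh2j : 0 ≤ h2j) (hh3j : 0 ≤ h3j)
    (τ2 : ℝ)
    (hτ2 : τ2 = (-(c1 + cbar2) +
        Real.sqrt ((c1 + cbar2) ^ 2 + 2 * δ2 * c1 * cbar2)) / (c1 * cbar2)) :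
    ∀ τ ∈ Set.Icc (0:ℝ) τ2,
      (c1 * cbar2 * (c1 * h2j - c2 * h3j) / 2) * τ ^ 2
          + (c1 ^ 2 * h2j - (c1 + cbar2) * c2 * h3j) * τ
          + δ2 * c2 * h3j
        ≥ c2 * h3j * (-(c1 * cbar2 / 2) * τ ^ 2 - (c1 + cbar2) * τ + δ2)
      ∧ c2 * h3j * (-(c1 * cbar2 / 2) * τ ^ 2 - (c1 + cbar2) * τ + δ2) ≥ 0 := by
  obtain ⟨hδ0, hδ1⟩ := hδ2
  have hcbar : 0 < cbar2 := by rw [hcbar2]; positivity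
  have hA : 0 < c1 * cbar2 := mul_pos hc1 hcbar
  have harg : (0:ℝ) ≤ (c1 + cbar2) ^ 2 + 2 * δ2 * c1 * cbar2 := by positivity
  have hsq : Real.sqrt ((c1 + cbar2) ^ 2 + 2 * δ2 * c1 * cbar2) ^ 2
      = (c1 + cbar2) ^ 2 + 2 * δ2 * c1 * cbar2 := Real.sq_sqrt harg
  have hkey : c1 * cbar2 * τ2 ^ 2 + 2 * (c1 + cbar2) * τ2 = 2 * δ2 := by
    have := hA.ne'
    field_simp [hτ2]
    rw [hτ2]
    field_simp
    rw [show (c1 + cbar2) ^ 2 + c1 * cbar2 * 2 * δ2 = (c1 + cbar2) ^ 2 + 2 * δ2 * c1 * cbar2 by ring]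
    nlinarith [hsq]
  intro τ hτ
  obtain ⟨hτ0, hττ2⟩ := hτ
  have hτ2sq : τ ^ 2 ≤ τ2 ^ 2 := by nlinarith
  have hq : 0 ≤ -(c1 * cbar2 / 2) * τ ^ 2 - (c1 + cbar2) * τ + δ2 := by nlinarith
  constructor
  · nlinarith [mul_nonneg (mul_nonneg (mul_nonneg (mul_nonneg hc1.le hc1.le) hcbar.le) hh2j) (sq_nonneg τ), mul_nonneg (mul_nonneg (mul_nonneg hc1.le hc1.le) hh2j) hτ0]
  · exact mul_nonneg (mul_nonneg hc2.le hh3j) hq
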